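/- Let Φ:[0,∞)→[0,∞) be a continuous strictly increasing bijection of [0,∞) onto [0,∞) whose restriction to (0,∞) is slowly varying at 0. Let (Y_t)_{t≥0} be a subordinator with Laplace exponent Φ on some probability space. Then for every n ≥ 1, all times 0 = s₀ < s₁ < … < s_n, and all x₁,…,x_n > 0: lim_{t→∞} P( Φ^{-1}(x_j/t)·Y_{s_j·t} ≤ 1 for all j = 1,…,n ) = exp( −Σ_{i=1}^n (s_i − s_{i−1})·max{x_i, x_{i+1}, …, x_n} ). Equivalently, setting y_j := 1/x_j, the limit equals F^{s₁}(y'₁)·F^{s₂−s₁}(y'₂)⋯F^{s_n−s_{n−1}}(y'_n) with F(y) = e^{−1/y} and y'_i = min{y_i,…,y_n}, which are the finite-dimensional distribution functions of the extremal process based on the measure μ(dy) = dy/y². -/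

import Mathlib

open Real MeasureTheory Filter Set Topology ProbabilityTheory

section auxx
variable (Φ Φinv : ℝ → ℝ)

lemma aux_inv_mono
    (hΦmono : StrictMonoOn Φ (Ici 0))
    (hΦinv : ∀ x ≥ (0:ℝ), Φinv (Φ x) = x ∧ Φ (Φinv x) = x ∧ 0 ≤ Φinv x) :
    ∀ y1 y2 : ℝ, 0 ≤ y1 → y1 ≤ y2 → Φinv y1 ≤ Φinv y2 := by
  intro y1 y2 h1 h12
  by_contra h
  push_neg at h
  have h2 : (0:ℝ) ≤ y2 := le_trans h1 h12
  have := hΦmono (mem_Ici.2 (hΦinv y2 h2).2.2) (mem_Ici.2 (hΦinv y1 h1).2.2) h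
  rw [(hΦinv y1 h1).2.1, (hΦinv y2 h2).2.1] at this
  linarith

lemma aux_inv_pos (hΦ0 : Φ 0 = 0)
    (hΦinv : ∀ x ≥ (0:ℝ), Φinv (Φ x) = x ∧ Φ (Φinv x) = x ∧ 0 ≤ Φinv x) :
    ∀ y : ℝ, 0 < y → 0 < Φinv y := by
  intro y hy
  rcases lt_or_eq_of_le (hΦinv y hy.le).2.2 with h | h
  · exact h
  · exfalso
    have := (hΦinv y hy.le).2.1
    rw [← h, hΦ0] at this
    linarith

/-- key limit: t * Φ (θ * Φinv (m/t)) → m -/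
lemma aux_key (hΦ0 : Φ 0 = 0)
    (hΦmono : StrictMonoOn Φ (Ici 0))
    (hΦinv : ∀ x ≥ (0:ℝ), Φinv (Φ x) = x ∧ Φ (Φinv x) = x ∧ 0 ≤ Φinv x)
    (hSV : ∀ l > (0:ℝ), Tendsto (fun x => Φ (l * x) / Φ x) (𝓝[>] 0) (𝓝 1))
    (θ m : ℝ) (hθ : 0 < θ) (hm : 0 < m) :
    Tendsto (fun t => t * Φ (θ * Φinv (m / t))) atTop (𝓝 m) := by
  have hΦpos : ∀ y : ℝ, 0 < y → 0 < Φ y := by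
    intro y hy
    have := hΦmono (mem_Ici.2 le_rfl) (mem_Ici.2 hy.le) hy
    rwa [hΦ0] at this
  have hu : Tendsto (fun t => Φinv (m / t)) atTop (𝓝[>] (0:ℝ)) := by
    rw [tendsto_nhdsWithin_iff]
    constructor
    · rw [tendsto_order]
      constructor
      · intro a ha
        filter_upwards [eventually_gt_atTop (0:ℝ)] with t ht
        exact lt_of_lt_of_le ha (hΦinv (m / t) (by positivity)).2.2
      · intro ε hε
        filter_upwards [eventually_gt_atTop (max 0 (m / Φ ε))] with t ht
        have ht0 : (0:ℝ) < t := lt_of_le_of_lt (le_max_left _ _) ht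
        have hΦε : 0 < Φ ε := hΦpos ε hε
        have hlt : m / t < Φ ε := by
          rw [div_lt_iff₀ ht0]
          have h2 : m / Φ ε < t := lt_of_le_of_lt (le_max_right _ _) ht
          have : m = (m / Φ ε) * Φ ε := by field_simp
          rw [this]
          calc m / Φ ε * Φ ε < t * Φ ε := mul_lt_mul_of_pos_right h2 hΦε
            _ = Φ ε * t := mul_comm _ _
        by_contra h
        push_neg at h
        have hmt0 : (0:ℝ) ≤ m / t := by positivity
        have := hΦmono.monotoneOn (mem_Ici.2 hε.le) (mem_Ici.2 (hΦinv (m/t) hmt0).2.2) h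
        rw [(hΦinv (m/t) hmt0).2.1] at this
        linarith
    · filter_upwards [eventually_gt_atTop (0:ℝ)] with t ht
      exact aux_inv_pos Φ Φinv hΦ0 hΦinv _ (by positivity)
  have hratio : Tendsto (fun t => Φ (θ * Φinv (m / t)) / Φ (Φinv (m / t))) atTop (𝓝 1) :=
    (hSV θ hθ).comp hu
  have h2 := hratio.const_mul m
  rw [mul_one] at h2
  apply h2.congr'
  filter_upwards [eventually_gt_atTop (0:ℝ)] with t ht
  have h1 : Φ (Φinv (m / t)) = m / t := (hΦinv (m / t) (by positivity)).2.1
  have h3 : 0 < m / t := by positivity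
  rw [h1]
  field_simp

end auxx

lemma aux_single {Ω : Type*} [MeasurableSpace Ω] (P : Measure Ω) [IsProbabilityMeasure P]
    (Y : ℝ → Ω → ℝ) (hYmeas : ∀ t, Measurable (Y t))
    (hYmono : ∀ s t : ℝ, 0 ≤ s → s ≤ t → ∀ᵐ ω ∂P, Y s ω ≤ Y t ω)
    (Φ Φinv : ℝ → ℝ) (hΦ0 : Φ 0 = 0)
    (hΦmono : StrictMonoOn Φ (Ici 0))
    (hΦinv : ∀ x ≥ (0:ℝ), Φinv (Φ x) = x ∧ Φ (Φinv x) = x ∧ 0 ≤ Φinv x)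
    (hSV : ∀ l > (0:ℝ), Tendsto (fun x => Φ (l * x) / Φ x) (𝓝[>] 0) (𝓝 1))
    (hLaplace : ∀ s t l : ℝ, 0 ≤ s → s ≤ t → 0 ≤ l →
      ∫ ω, Real.exp (-(l * (Y t ω - Y s ω))) ∂P = Real.exp (-((t - s) * Φ l)))
    (a b m r : ℝ) (ha : 0 ≤ a) (hab : a < b) (hm : 0 < m) (hr : 0 < r) :
    Tendsto (fun t => (P {ω | Φinv (m / t) * (Y (b * t) ω - Y (a * t) ω) ≤ r}).toReal)
      atTop (𝓝 (Real.exp (-((b - a) * m)))) := by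
  set L : ℝ := Real.exp (-((b - a) * m)) with hL
  set q : ℝ → ℝ := fun t => (P {ω | Φinv (m / t) * (Y (b * t) ω - Y (a * t) ω) ≤ r}).toReal with hq
  set I : ℝ → ℝ → ℝ := fun θ t => Real.exp (-((b * t - a * t) * Φ (θ * Φinv (m / t)))) with hIdef
  have hI : ∀ θ : ℝ, 0 < θ → Tendsto (fun t => I θ t) atTop (𝓝 L) := by
    intro θ hθ
    have h1 := aux_key Φ Φinv hΦ0 hΦmono hΦinv hSV θ m hθ hm
    have h2 : Tendsto (fun t => -((b - a) * (t * Φ (θ * Φinv (m / t))))) atTop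
        (𝓝 (-((b - a) * m))) := (h1.const_mul (b - a)).neg
    have h3 := (Real.continuous_exp.tendsto _).comp h2
    exact h3.congr (fun t => congrArg Real.exp (by ring))
  have hub : ∀ θ : ℝ, 0 < θ → ∀ t : ℝ, 0 < t → q t ≤ Real.exp (θ * r) * I θ t := by
    intro θ hθ t ht
    have hmt : (0:ℝ) ≤ m / t := by positivity
    set u : ℝ := Φinv (m / t) with hu
    have hu0 : 0 ≤ u := (hΦinv (m / t) hmt).2.2
    set Z : Ω → ℝ := fun ω => u * (Y (b * t) ω - Y (a * t) ω) with hZ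
    have hZmeas : Measurable Z := ((hYmeas (b * t)).sub (hYmeas (a * t))).const_mul u
    have hS : MeasurableSet {ω | Z ω ≤ r} := measurableSet_le hZmeas measurable_const
    have hZae : ∀ᵐ ω ∂P, 0 ≤ Z ω := by
      filter_upwards [hYmono (a * t) (b * t) (by positivity)
        (by nlinarith)] with ω hω
      exact mul_nonneg hu0 (by linarith)
    have hint : ∫ ω, Real.exp (-(θ * Z ω)) ∂P = I θ t := by
      have := hLaplace (a * t) (b * t) (θ * u) (by positivity) (by nlinarith)
        (mul_nonneg hθ.le hu0)
      rw [hIdef]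
      simp only
      rw [← this]
      · apply integral_congr_ae
        filter_upwards with ω
        congr 1
        ring
    have hf_int : Integrable (fun ω => Real.exp (-(θ * Z ω))) P := by
      apply Integrable.mono' (integrable_const (1:ℝ))
      · exact (Real.measurable_exp.comp (hZmeas.const_mul θ).neg).aestronglyMeasurable
      · filter_upwards [hZae] with ω h0
        rw [Real.norm_eq_abs, abs_of_pos (Real.exp_pos _)]
        exact Real.exp_le_one_iff.2 (by nlinarith)
    have hind : ∫ ω, ({ω | Z ω ≤ r}).indicator (fun _ => Real.exp (-(θ * r))) ω ∂P
        = (P {ω | Z ω ≤ r}).toReal * Real.exp (-(θ * r)) := by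
      rw [integral_indicator_const _ hS]; simp [smul_eq_mul]; rfl
    have hmono : (P {ω | Z ω ≤ r}).toReal * Real.exp (-(θ * r)) ≤ ∫ ω, Real.exp (-(θ * Z ω)) ∂P := by
      rw [← hind]
      apply integral_mono ((integrable_const _).indicator hS) hf_int
      intro ω
      by_cases hω : ω ∈ {ω | Z ω ≤ r}
      · rw [Set.indicator_of_mem hω]
        exact Real.exp_le_exp.2 (by have := hω; simp only [Set.mem_setOf_eq] at this; nlinarith)
      · rw [Set.indicator_of_notMem hω]
        exact (Real.exp_pos _).le
    rw [hint] at hmono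
    have hq' : q t = (P {ω | Z ω ≤ r}).toReal := rfl
    rw [hq']
    calc (P {ω | Z ω ≤ r}).toReal
        = Real.exp (θ * r) * ((P {ω | Z ω ≤ r}).toReal * Real.exp (-(θ * r))) := by
          rw [← mul_assoc, mul_comm (Real.exp (θ * r)), mul_assoc, ← Real.exp_add]
          simp
      _ ≤ Real.exp (θ * r) * I θ t := by
          exact mul_le_mul_of_nonneg_left hmono (Real.exp_pos _).le
  have hlb : ∀ θ : ℝ, 0 < θ → ∀ t : ℝ, 0 < t → I θ t - Real.exp (-(θ * r)) ≤ q t := by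
    intro θ hθ t ht
    have hmt : (0:ℝ) ≤ m / t := by positivity
    set u : ℝ := Φinv (m / t) with hu
    have hu0 : 0 ≤ u := (hΦinv (m / t) hmt).2.2
    set Z : Ω → ℝ := fun ω => u * (Y (b * t) ω - Y (a * t) ω) with hZ
    have hZmeas : Measurable Z := ((hYmeas (b * t)).sub (hYmeas (a * t))).const_mul u
    have hS : MeasurableSet {ω | Z ω ≤ r} := measurableSet_le hZmeas measurable_const
    have hZae : ∀ᵐ ω ∂P, 0 ≤ Z ω := by
      filter_upwards [hYmono (a * t) (b * t) (by positivity)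
        (by nlinarith)] with ω hω
      exact mul_nonneg hu0 (by linarith)
    have hint : ∫ ω, Real.exp (-(θ * Z ω)) ∂P = I θ t := by
      have := hLaplace (a * t) (b * t) (θ * u) (by positivity) (by nlinarith)
        (mul_nonneg hθ.le hu0)
      rw [hIdef]
      simp only
      rw [← this]
      apply integral_congr_ae
      filter_upwards with ω
      congr 1
      ring
    have hf_int : Integrable (fun ω => Real.exp (-(θ * Z ω))) P := by
      apply Integrable.mono' (integrable_const (1:ℝ))
      · exact (Real.measurable_exp.comp (hZmeas.const_mul θ).neg).aestronglyMeasurable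
      · filter_upwards [hZae] with ω h0
        rw [Real.norm_eq_abs, abs_of_pos (Real.exp_pos _)]
        exact Real.exp_le_one_iff.2 (by nlinarith)
    have hg_int : Integrable (fun ω => ({ω | Z ω ≤ r}).indicator (fun _ => (1:ℝ)) ω
        + Real.exp (-(θ * r))) P :=
      ((integrable_const _).indicator hS).add (integrable_const _)
    have hmono : ∫ ω, Real.exp (-(θ * Z ω)) ∂P
        ≤ (P {ω | Z ω ≤ r}).toReal + Real.exp (-(θ * r)) := by
      have h1 : ∫ ω, (({ω | Z ω ≤ r}).indicator (fun _ => (1:ℝ)) ω + Real.exp (-(θ * r))) ∂P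
          = (P {ω | Z ω ≤ r}).toReal + Real.exp (-(θ * r)) := by
        rw [integral_add ((integrable_const _).indicator hS) (integrable_const _),
          integral_indicator_const _ hS, integral_const]
        simp [smul_eq_mul]
        rfl
      rw [← h1]
      apply integral_mono_ae hf_int hg_int
      filter_upwards [hZae] with ω h0
      by_cases hω : ω ∈ {ω | Z ω ≤ r}
      · rw [Set.indicator_of_mem hω]
        have : Real.exp (-(θ * Z ω)) ≤ 1 := Real.exp_le_one_iff.2 (by nlinarith)
        have hpos := (Real.exp_pos (-(θ * r))).le
        linarith
      · rw [Set.indicator_of_notMem hω]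
        have : r < Z ω := by simpa [Set.mem_setOf_eq, not_le] using hω
        have : Real.exp (-(θ * Z ω)) ≤ Real.exp (-(θ * r)) :=
          Real.exp_le_exp.2 (by nlinarith)
        linarith
    rw [hint] at hmono
    have hq' : q t = (P {ω | Z ω ≤ r}).toReal := rfl
    rw [hq']
    linarith
  rw [Metric.tendsto_nhds]
  intro ε hε
  have hc1 : Tendsto (fun θ : ℝ => Real.exp (θ * r) * L) (𝓝[>] 0) (𝓝 L) := by
    have : Tendsto (fun θ : ℝ => Real.exp (θ * r) * L) (𝓝 0) (𝓝 (Real.exp (0 * r) * L)) :=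
      ((Real.continuous_exp.comp (continuous_id.mul continuous_const)).mul
        continuous_const).tendsto 0
    simpa using this.mono_left nhdsWithin_le_nhds
  have hθ1ex : ∃ θ : ℝ, 0 < θ ∧ Real.exp (θ * r) * L < L + ε / 2 := by
    have hlt : ∀ᶠ θ in 𝓝[>] (0:ℝ), Real.exp (θ * r) * L < L + ε / 2 :=
      hc1.eventually_lt_const (by linarith)
    have hpos : ∀ᶠ θ in 𝓝[>] (0:ℝ), (0:ℝ) < θ := self_mem_nhdsWithin
    exact (hpos.and hlt).exists
  obtain ⟨θ1, hθ1, hθ1lt⟩ := hθ1ex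
  have hθ2ex : ∃ θ : ℝ, 0 < θ ∧ Real.exp (-(θ * r)) < ε / 2 := by
    have h1 : Tendsto (fun θ : ℝ => θ * r) atTop atTop := tendsto_id.atTop_mul_const hr
    have h2 : Tendsto (fun θ : ℝ => -(θ * r)) atTop atBot := tendsto_neg_atBot_iff.2 h1
    have h3 : Tendsto (fun θ : ℝ => Real.exp (-(θ * r))) atTop (𝓝 0) :=
      Real.tendsto_exp_atBot.comp h2
    have hlt : ∀ᶠ θ in atTop, Real.exp (-(θ * r)) < ε / 2 :=
      h3.eventually_lt_const (by linarith)
    exact ((eventually_gt_atTop (0:ℝ)).and hlt).exists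
  obtain ⟨θ2, hθ2, hθ2lt⟩ := hθ2ex
  have hIub : Tendsto (fun t => Real.exp (θ1 * r) * I θ1 t) atTop (𝓝 (Real.exp (θ1 * r) * L)) :=
    (hI θ1 hθ1).const_mul _
  filter_upwards [eventually_gt_atTop (0:ℝ),
    hIub.eventually_lt_const (show Real.exp (θ1 * r) * L < L + ε by linarith),
    (hI θ2 hθ2).eventually_const_lt (show L - ε / 2 < L by linarith)] with t ht h1 h2
  rw [Real.dist_eq, abs_sub_lt_iff]
  have hu' := hub θ1 hθ1 t ht
  have hl' := hlb θ2 hθ2 t ht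
  constructor
  · linarith
  · linarith




/-- convergence of the finite-dimensional distributions of the
renormalised subordinator towards those of the extremal process based on
`μ(dy) = dy/y²`. -/
theorem stmt_18
    {Ω : Type*} [MeasurableSpace Ω] (P : Measure Ω) [IsProbabilityMeasure P]
    (Y : ℝ → Ω → ℝ)
    (hYmeas : ∀ t, Measurable (Y t))
    (hY0 : ∀ᵐ ω ∂P, Y 0 ω = 0)
    (hYnonneg : ∀ t : ℝ, 0 ≤ t → ∀ᵐ ω ∂P, 0 ≤ Y t ω)
    (hYmono : ∀ s t : ℝ, 0 ≤ s → s ≤ t → ∀ᵐ ω ∂P, Y s ω ≤ Y t ω)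
    (hYindep : ∀ (m : ℕ) (τ : Fin (m + 1) → ℝ), (∀ i, 0 ≤ τ i) → Monotone τ →
      iIndepFun (m := fun _ : Fin m => Real.measurableSpace)
        (fun i ω => Y (τ i.succ) ω - Y (τ i.castSucc) ω) P)
    -- Φ : continuous strictly increasing bijection of [0,∞) onto [0,∞)
    (Φ Φinv : ℝ → ℝ)
    (hΦ0 : Φ 0 = 0)
    (hΦmono : StrictMonoOn Φ (Ici 0))
    (hΦcont : ContinuousOn Φ (Ici 0))
    (hΦsurj : Φ '' (Ici 0) = Ici 0)
    (hΦinv : ∀ x ≥ (0:ℝ), Φinv (Φ x) = x ∧ Φ (Φinv x) = x ∧ 0 ≤ Φinv x)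
    (hSV : ∀ l > (0:ℝ), Tendsto (fun x => Φ (l * x) / Φ x) (𝓝[>] 0) (𝓝 1))
    -- (Y_t) is a subordinator with Laplace exponent Φ
    (hLaplace : ∀ s t l : ℝ, 0 ≤ s → s ≤ t → 0 ≤ l →
      ∫ ω, Real.exp (-(l * (Y t ω - Y s ω))) ∂P = Real.exp (-((t - s) * Φ l)))
    (n : ℕ) (hn : 0 < n)
    (s : Fin (n + 1) → ℝ) (hs0 : s 0 = 0) (hsmono : StrictMono s)
    (x : Fin n → ℝ) (hx : ∀ j, 0 < x j) :
    Tendsto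
      (fun t => (P {ω | ∀ j : Fin n, Φinv (x j / t) * Y (s j.succ * t) ω ≤ 1}).toReal)
      atTop
      (𝓝 (Real.exp (-(∑ i : Fin n, (s i.succ - s i.castSucc) *
        ((Finset.univ.filter fun j => i ≤ j).sup'
          ⟨i, by simp⟩ x))))) := by
  have hspos : ∀ i : Fin (n+1), 0 ≤ s i := by
    intro i
    rw [← hs0]
    exact hsmono.monotone (Fin.zero_le i)
  have hne : ∀ i : Fin n, (Finset.univ.filter fun j => i ≤ j).Nonempty := fun i => ⟨i, by simp⟩
  set M : Fin n → ℝ := fun i => (Finset.univ.filter fun j => i ≤ j).sup' (hne i) x with hMdef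
  have hMx : ∀ i, ∃ j, i ≤ j ∧ M i = x j := by
    intro i
    obtain ⟨j, hj, hjeq⟩ := Finset.exists_mem_eq_sup' (hne i) x
    exact ⟨j, by simpa using hj, hjeq⟩
  have hMge : ∀ i j : Fin n, i ≤ j → x j ≤ M i := fun i j hij =>
    Finset.le_sup' x (by simpa using hij)
  have hMpos : ∀ i, 0 < M i := by
    intro i
    obtain ⟨j, _, h⟩ := hMx i
    rw [h]; exact hx j
  have hnR : (0:ℝ) < n := Nat.cast_pos.2 hn
  -- events
  set E : ℝ → ℝ → Fin n → Set Ω := fun r t i =>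
    {ω | Φinv (M i / t) * (Y (s i.succ * t) ω - Y (s i.castSucc * t) ω) ≤ r} with hEdef
  have hprod : ∀ r : ℝ, 0 < r →
      Tendsto (fun t => ∏ i : Fin n, (P (E r t i)).toReal) atTop
        (𝓝 (∏ i : Fin n, Real.exp (-((s i.succ - s i.castSucc) * M i)))) := by
    intro r hr
    apply tendsto_finset_prod
    intro i _
    exact aux_single P Y hYmeas hYmono Φ Φinv hΦ0 hΦmono hΦinv hSV hLaplace
      (s i.castSucc) (s i.succ) (M i) r (hspos _) (hsmono (Fin.castSucc_lt_succ (i := i))) (hMpos i) hr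
  have hprodeq : (∏ i : Fin n, Real.exp (-((s i.succ - s i.castSucc) * M i)))
      = Real.exp (-(∑ i : Fin n, (s i.succ - s i.castSucc) * M i)) := by
    rw [← Real.exp_sum, ← Finset.sum_neg_distrib]
  -- main squeeze
  have hbound : ∀ t : ℝ, 0 < t → ∀ r : ℝ,
      ((∀ᵐ ω ∂P, (∀ j : Fin n, Φinv (x j / t) * Y (s j.succ * t) ω ≤ 1) → ω ∈ ⋂ i, E 1 t i)
      ∧ (∀ᵐ ω ∂P, ω ∈ ⋂ i, E ((1:ℝ)/n) t i → (∀ j : Fin n, Φinv (x j / t) * Y (s j.succ * t) ω ≤ 1))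
      ∧ P (⋂ i, E r t i) = ∏ i : Fin n, P (E r t i)) := by
    intro t ht r
    have hs0t : s 0 * t = 0 := by rw [hs0, zero_mul]
    -- a.e. good set
    have hG : ∀ᵐ ω ∂P, Y 0 ω = 0 ∧
        ∀ p q : Fin (n+1), p ≤ q → Y (s p * t) ω ≤ Y (s q * t) ω := by
      refine hY0.and ?_
      rw [ae_all_iff]
      intro p
      rw [ae_all_iff]
      intro q
      by_cases hpq : p ≤ q
      · filter_upwards [hYmono (s p * t) (s q * t) (mul_nonneg (hspos p) ht.le)
          (mul_le_mul_of_nonneg_right (hsmono.monotone hpq) ht.le)] with ω h _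
        exact h
      · filter_upwards with ω h
        exact absurd h hpq
    refine ⟨?_, ?_, ?_⟩
    · -- upper inclusion
      filter_upwards [hG] with ω hg hA
      obtain ⟨h0, hmon⟩ := hg
      rw [Set.mem_iInter]
      intro i
      obtain ⟨j0, hij0, hMeq⟩ := hMx i
      have hY0t : Y (s 0 * t) ω = 0 := by rw [hs0t]; exact h0
      have h1 : 0 ≤ Y (s i.castSucc * t) ω := by
        have := hmon 0 i.castSucc (Fin.zero_le _)
        rw [hY0t] at this
        exact this
      have h2 : Y (s i.succ * t) ω ≤ Y (s j0.succ * t) ω :=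
        hmon i.succ j0.succ (Fin.succ_le_succ_iff.2 hij0)
      have hc0 : 0 ≤ Φinv (M i / t) := (hΦinv _ (div_nonneg (hMpos i).le ht.le)).2.2
      show Φinv (M i / t) * (Y (s i.succ * t) ω - Y (s i.castSucc * t) ω) ≤ 1
      calc Φinv (M i / t) * (Y (s i.succ * t) ω - Y (s i.castSucc * t) ω)
          ≤ Φinv (M i / t) * Y (s j0.succ * t) ω :=
            mul_le_mul_of_nonneg_left (by linarith) hc0
        _ = Φinv (x j0 / t) * Y (s j0.succ * t) ω := by rw [hMeq]
        _ ≤ 1 := hA j0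
    · -- lower inclusion
      filter_upwards [hG] with ω hg hE'
      obtain ⟨h0, hmon⟩ := hg
      rw [Set.mem_iInter] at hE'
      intro j
      have hY0t : Y (s 0 * t) ω = 0 := by rw [hs0t]; exact h0
      set f : ℕ → ℝ := fun k => if h : k < n + 1 then Y (s ⟨k, h⟩ * t) ω else 0 with hf
      have hjn : (j:ℕ) + 1 ≤ n := Nat.succ_le_of_lt j.isLt
      have key : ∀ k : ℕ, k ≤ (j:ℕ) + 1 → Φinv (x j / t) * f k ≤ (k:ℝ) / n := by
        intro k
        induction k with
        | zero =>
          intro _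
          have h01 : (0:ℕ) < n + 1 := by omega
          have hf0 : f 0 = 0 := by
            rw [hf]
            simp only
            rw [dif_pos h01]
            have heq : (⟨0, h01⟩ : Fin (n+1)) = 0 := Fin.ext (by simp)
            rw [heq, hs0t] at *
            rw [hs0t]
            exact hY0t
          rw [hf0]
          simp
        | succ k ih =>
          intro hk
          have hkj : k ≤ (j:ℕ) := by omega
          have hkn : k < n := lt_of_le_of_lt hkj j.isLt
          have hk1 : k < n + 1 := by omega
          have hk2 : k + 1 < n + 1 := by omega
          have hfk : f k = Y (s (Fin.castSucc ⟨k, hkn⟩) * t) ω := by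
            rw [hf]
            simp only
            rw [dif_pos hk1]
            have heq : (⟨k, hk1⟩ : Fin (n+1)) = Fin.castSucc ⟨k, hkn⟩ := Fin.ext (by simp)
            rw [heq]
          have hfk1 : f (k+1) = Y (s (Fin.succ ⟨k, hkn⟩) * t) ω := by
            rw [hf]
            simp only
            rw [dif_pos hk2]
            have heq : (⟨k+1, hk2⟩ : Fin (n+1)) = Fin.succ ⟨k, hkn⟩ := Fin.ext (by simp)
            rw [heq]
          have hEi : Φinv (M ⟨k, hkn⟩ / t) * (f (k+1) - f k) ≤ 1/n := by
            rw [hfk, hfk1]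
            exact hE' ⟨k, hkn⟩
          have hD : 0 ≤ f (k+1) - f k := by
            rw [hfk, hfk1]
            have := hmon (Fin.castSucc ⟨k, hkn⟩) (Fin.succ ⟨k, hkn⟩)
              (Fin.castSucc_lt_succ (i := _)).le
            linarith
          have haj : Φinv (x j / t) ≤ Φinv (M ⟨k, hkn⟩ / t) :=
            aux_inv_mono Φ Φinv hΦmono hΦinv _ _ (div_nonneg (hx j).le ht.le)
              ((div_le_div_iff_of_pos_right ht).2 (hMge ⟨k, hkn⟩ j hkj))
          have ihk := ih (by omega)
          calc Φinv (x j / t) * f (k+1)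
              = Φinv (x j / t) * f k + Φinv (x j / t) * (f (k+1) - f k) := by ring
            _ ≤ (k:ℝ)/n + Φinv (M ⟨k, hkn⟩ / t) * (f (k+1) - f k) :=
                add_le_add ihk (mul_le_mul_of_nonneg_right haj hD)
            _ ≤ (k:ℝ)/n + 1/n := by linarith
            _ = ((k+1 : ℕ):ℝ)/n := by push_cast; ring
      have hj1 := key ((j:ℕ)+1) le_rfl
      have hjn1 : (j:ℕ) + 1 < n + 1 := by omega
      have hfjs : f ((j:ℕ)+1) = Y (s j.succ * t) ω := by
        rw [hf]
        simp only
        rw [dif_pos hjn1]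
        have heq : (⟨(j:ℕ)+1, hjn1⟩ : Fin (n+1)) = j.succ := Fin.ext (by simp)
        rw [heq]
      rw [hfjs] at hj1
      calc Φinv (x j / t) * Y (s j.succ * t) ω ≤ (((j:ℕ)+1 : ℕ):ℝ)/n := by
            push_cast at hj1 ⊢; exact hj1
        _ ≤ 1 := by
            rw [div_le_one hnR]
            exact_mod_cast hjn
    · -- independence
      have hτ0 : ∀ i : Fin (n+1), 0 ≤ s i * t := fun i => mul_nonneg (hspos i) ht.le
      have hτmono : Monotone (fun i : Fin (n+1) => s i * t) := fun i j hij =>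
        mul_le_mul_of_nonneg_right (hsmono.monotone hij) ht.le
      have hindep := hYindep n (fun i => s i * t) hτ0 hτmono
      have h := hindep.measure_inter_preimage_eq_mul Finset.univ
        (sets := fun i => {y : ℝ | Φinv (M i / t) * y ≤ r})
        (fun i _ => measurableSet_le (measurable_id.const_mul _) measurable_const)
      have huniv : (⋂ i, E r t i) = ⋂ i ∈ Finset.univ,
          ((fun ω => Y (s (Fin.succ i) * t) ω - Y (s (Fin.castSucc i) * t) ω) ⁻¹'
            {y : ℝ | Φinv (M i / t) * y ≤ r}) := by
        simp only [Finset.mem_univ, Set.iInter_true]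
        rfl
      rw [huniv, h]
      rfl
  have hmain : Tendsto
      (fun t => (P {ω | ∀ j : Fin n, Φinv (x j / t) * Y (s j.succ * t) ω ≤ 1}).toReal)
      atTop (𝓝 (Real.exp (-(∑ i : Fin n, (s i.succ - s i.castSucc) * M i)))) := by
    rw [← hprodeq]
    apply tendsto_of_tendsto_of_tendsto_of_le_of_le' (hprod (1/n) (by positivity))
      (hprod 1 one_pos)
    · filter_upwards [eventually_gt_atTop (0:ℝ)] with t ht
      obtain ⟨hup, hlow, hind⟩ := hbound t ht ((1:ℝ)/n)
      have hmle : P (⋂ i, E ((1:ℝ)/n) t i)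
          ≤ P {ω | ∀ j : Fin n, Φinv (x j / t) * Y (s j.succ * t) ω ≤ 1} := by
        apply measure_mono_ae
        filter_upwards [hlow] with ω hω hmem
        exact hω hmem
      calc ∏ i : Fin n, (P (E ((1:ℝ)/n) t i)).toReal
          = (P (⋂ i, E ((1:ℝ)/n) t i)).toReal := by rw [hind, ENNReal.toReal_prod]
        _ ≤ _ := ENNReal.toReal_mono (measure_ne_top P _) hmle
    · filter_upwards [eventually_gt_atTop (0:ℝ)] with t ht
      obtain ⟨hup, hlow, hind⟩ := hbound t ht 1
      have hmle : P {ω | ∀ j : Fin n, Φinv (x j / t) * Y (s j.succ * t) ω ≤ 1}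
          ≤ P (⋂ i, E 1 t i) := by
        apply measure_mono_ae
        filter_upwards [hup] with ω hω hmem
        exact hω hmem
      calc (P {ω | ∀ j : Fin n, Φinv (x j / t) * Y (s j.succ * t) ω ≤ 1}).toReal
          ≤ (P (⋂ i, E 1 t i)).toReal := ENNReal.toReal_mono (measure_ne_top P _) hmle
        _ = ∏ i : Fin n, (P (E 1 t i)).toReal := by rw [hind, ENNReal.toReal_prod]
  exact hmain
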